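/- Let b > 0. Then there exists ε₀ > 0 such that for every ε ∈ (0, ε₀), the 2×2 real symmetric matrices M_ε(P) and M_ε(−P), where P = [[1, −b],[0, 1]], are both positive definite (so each has signature 2). -/

import Mathlib

open Matrix

/-- `M_ε(P) = Pᵀ S⁻(ε) P + S⁺(ε)` for `2 × 2` matrices, where
`S⁻(ε) = [[sin 2ε, −cos 2ε], [−cos 2ε, −sin 2ε]]` and
`S⁺(ε) = [[sin 2ε, cos 2ε], [cos 2ε, −sin 2ε]]`. -/
noncomputable def Meps2 (ε : ℝ) (P : Matrix (Fin 2) (Fin 2) ℝ) : Matrix (Fin 2) (Fin 2) ℝ :=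
  Pᵀ * !![Real.sin (2 * ε), -Real.cos (2 * ε); -Real.cos (2 * ε), -Real.sin (2 * ε)] * P
    + !![Real.sin (2 * ε), Real.cos (2 * ε); Real.cos (2 * ε), -Real.sin (2 * ε)]

lemma posdef2 (a h d : ℝ) (ha : 0 < a) (hdet : 0 < a*d - h^2) : (!![a,h;h,d]).PosDef := by
  have hd : 0 < d := by nlinarith [sq_nonneg h]
  rw [Matrix.posDef_iff_dotProduct_mulVec]
  constructor
  · ext i j; fin_cases i <;> fin_cases j <;> simp [Matrix.IsHermitian]
  · intro x hx
    have hx' : x 0 ≠ 0 ∨ x 1 ≠ 0 := by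
      by_contra hc
      push_neg at hc
      exact hx (funext fun i => by fin_cases i <;> simp [hc.1, hc.2])
    simp [dotProduct, Matrix.mulVec, Fin.sum_univ_two]
    rcases hx' with h0 | h0
    · have : 0 < x 0 ^ 2 := by positivity
      nlinarith [sq_nonneg (h * x 0 + d * x 1)]
    · have : 0 < x 1 ^ 2 := by positivity
      nlinarith [sq_nonneg (a * x 0 + h * x 1)]

lemma meps2_eq (b ε : ℝ) :
    Meps2 ε !![1, -b; 0, 1] =
      !![2 * Real.sin (2*ε), -b * Real.sin (2*ε);
         -b * Real.sin (2*ε), b^2 * Real.sin (2*ε) + 2*b*Real.cos (2*ε) - 2*Real.sin (2*ε)] := by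
  ext i j
  fin_cases i <;> fin_cases j <;>
    simp [Meps2, Matrix.mul_apply, Fin.sum_univ_two, Matrix.transpose_apply,
      Matrix.vecHead, Matrix.vecTail] <;> ring

lemma meps2_neg_eq (b ε : ℝ) :
    Meps2 ε (-!![1, -b; 0, 1]) =
      !![2 * Real.sin (2*ε), -b * Real.sin (2*ε);
         -b * Real.sin (2*ε), b^2 * Real.sin (2*ε) + 2*b*Real.cos (2*ε) - 2*Real.sin (2*ε)] := by
  ext i j
  fin_cases i <;> fin_cases j <;>
    simp [Meps2, Matrix.mul_apply, Fin.sum_univ_two, Matrix.transpose_apply,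
      Matrix.vecHead, Matrix.vecTail] <;> ring

theorem stmt_16 (b : ℝ) (hb : 0 < b) :
    ∃ ε₀ > (0 : ℝ), ∀ ε : ℝ, 0 < ε → ε < ε₀ →
      (Meps2 ε !![1, -b; 0, 1]).PosDef ∧ (Meps2 ε (-!![1, -b; 0, 1])).PosDef := by
  refine ⟨min (Real.pi / 8) (b / 4), lt_min (by positivity) (by positivity), ?_⟩
  intro ε hε hε'
  have hεpi : ε < Real.pi / 8 := lt_of_lt_of_le hε' (min_le_left _ _)
  have hεb : ε < b / 4 := lt_of_lt_of_le hε' (min_le_right _ _)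
  set s := Real.sin (2*ε) with hs
  set c := Real.cos (2*ε) with hc
  have h2ε : 0 < 2*ε := by linarith
  have h2εpi : 2*ε ≤ Real.pi / 4 := by linarith
  have hspos : 0 < s := Real.sin_pos_of_pos_of_lt_pi h2ε
    (lt_of_le_of_lt h2εpi (by linarith [Real.pi_pos]))
  have hsle : s < 2*ε := Real.sin_lt h2ε
  have hcge : Real.cos (Real.pi / 4) ≤ c := by
    apply Real.cos_le_cos_of_nonneg_of_le_pi (by linarith) (by linarith [Real.pi_pos]) h2εpi
  have hsqrt : (1:ℝ) < Real.sqrt 2 := by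
    nlinarith [Real.sq_sqrt (by norm_num : (2:ℝ) ≥ 0), Real.sqrt_nonneg 2]
  have hchalf : (1:ℝ)/2 < c := by
    rw [Real.cos_pi_div_four] at hcge
    nlinarith
  have key : 0 < b^2 * s + 4*b*c - 4*s := by nlinarith
  have hdet : 0 < (2*s) * (b^2 * s + 2*b*c - 2*s) - (-b*s)^2 := by nlinarith
  have hpd := posdef2 (2*s) (-b*s) (b^2 * s + 2*b*c - 2*s) (by linarith) hdet
  exact ⟨(meps2_eq b ε) ▸ hpd, (meps2_neg_eq b ε) ▸ hpd⟩
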